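/- In a generalised voting game, suppose x_max is an O-maximal action for player i and Pr(O) ≠ 1. Then the Coleman power-to-initiate-action measure, i.e. the conditional probability that player i is criticality-δ increasingly critical given that the outcome is not O, satisfies Pr(O_IC_i^δ | {ω | W(ω) ≠ O}) = (Pr(O | x_max) − Pr(O)) / (1 − Pr(O)). -/
import Mathlib


open MeasureTheory Function

theorem stmt_10
    {ι : Type*} [Fintype ι] [Nonempty ι] [DecidableEq ι]
    {X : ι → Type*} [∀ j, MeasurableSpace (X j)]
    (μ : ∀ j, Measure (X j)) [∀ j, IsProbabilityMeasure (μ j)]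
    {𝒪 : Type*} [MeasurableSpace 𝒪] [MeasurableSingletonClass 𝒪]
    (W : (∀ j, X j) → 𝒪) (hW : Measurable W)
    (O : 𝒪) (i : ι)
    (x_max : X i)
    (hmax : ∀ ω : ∀ j, X j, ∀ x : X i, W (update ω i x) = O →
      W (update ω i x_max) = O)
    (hne : Measure.pi μ {ω | W ω = O} ≠ 1)
    :
    Measure.pi μ ({ω | W ω ≠ O ∧ W (update ω i x_max) = O} ∩ {ω | W ω ≠ O}) /
        Measure.pi μ {ω | W ω ≠ O} =
      (Measure.pi μ {ω | W (update ω i x_max) = O} - Measure.pi μ {ω | W ω = O}) / (1 - Measure.pi μ {ω | W ω = O}) := by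
  set P := Measure.pi μ with hP
  set A : Set (∀ j, X j) := {ω | W ω = O} with hA
  set B : Set (∀ j, X j) := {ω | W (update ω i x_max) = O} with hB
  have hAmeas : MeasurableSet A := hW (measurableSet_singleton O)
  have hAB : A ⊆ B := fun ω hω => hmax ω (ω i) (by rwa [update_eq_self])
  have h1 : ({ω | W ω ≠ O ∧ W (update ω i x_max) = O} ∩ {ω | W ω ≠ O}) = B \ A := by
    ext ω; simp [hA, hB, Set.mem_diff, and_comm]
  have h2 : ({ω : ∀ j, X j | W ω ≠ O}) = Aᶜ := rfl
  have h3 : P (B \ A) = P B - P A := by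
    exact measure_diff hAB (by exact hAmeas.nullMeasurableSet) (measure_ne_top P A)
  have h4 : P Aᶜ = 1 - P A := by
    rw [measure_compl hAmeas (measure_ne_top P A), measure_univ]
  rw [h1, h2, h3, h4]
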